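/- Let q = (τ⁺, τ⁻, ℘) be a couple and d ≥ 1. The map sending (η, ζ) ∈ C^q(ℝ^d) × D^q(ℝ^d) to the nodewise combination ξ defined by ξ_n = ζ_n + ι_n·η_n/2 for every node n of q is a linear isomorphism onto D^{τ*}(ℝ^d). Moreover, for all η, ζ ∈ ℝ^d it restricts to a bijection from C^q_η × D^q_ζ onto D^{τ*}_{ζ+η/2, ζ−η/2}. -/

import Mathlib

noncomputable section
open scoped Classical

namespace WickNLS

/-! ## Ternary trees, signed ternary trees and couples -/

/-- Ternary trees: every non-leaf (branching) node has three ordered children. -/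
inductive TTree : Type
  | leaf : TTree
  | node : TTree → TTree → TTree → TTree
deriving DecidableEq

namespace TTree

/-- The order of a ternary tree: the number of its branching nodes. -/
def order : TTree → ℕ
  | leaf => 0
  | node a b c => order a + order b + order c + 1

/-- The subtree of `t` at the path `p` from the root (child indices `0,1,2` denote the
left, middle and right child, respectively), if `p` is a valid path. -/
def sub : TTree → List (Fin 3) → Option TTree
  | t, [] => some t
  | leaf, _ :: _ => none
  | node a b c, i :: p => sub (if i = 0 then a else if i = 1 then b else c) p

/-- `p` is (the path of) a node of `t`. -/
def valid (t : TTree) (p : List (Fin 3)) : Prop := (t.sub p).isSome = true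

/-- `p` is (the path of) a leaf node of `t`. -/
def isLeaf (t : TTree) (p : List (Fin 3)) : Prop := t.sub p = some leaf

/-- `p` is (the path of) a branching node of `t`. -/
def isBranch (t : TTree) (p : List (Fin 3)) : Prop := ∃ a b c, t.sub p = some (node a b c)

/-- Replace the subtree at the path `p` by `r`. -/
def replace : TTree → List (Fin 3) → TTree → TTree
  | _, [], r => r
  | leaf, _ :: _, _ => leaf
  | node a b c, i :: p, r =>
      if i = 0 then node (replace a p r) b c
      else if i = 1 then node a (replace b p r) c
      else node a b (replace c p r)

end TTree

/-- The sign `ι` of the node at path `p` of a signed ternary tree whose root carries the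
sign `σ`: because `ι_{b[j]} = ι_b · (-1)^(j+1)`, the sign is kept by the two outer
children and flipped by the middle child. -/
def nodeSign (σ : ℤ) (p : List (Fin 3)) : ℤ := σ * (-1) ^ (p.count (1 : Fin 3))

/-- Nodes of a couple: `(true, p)` is the node at path `p` of the positive tree `τ⁺`,
and `(false, p)` is the node at path `p` of the negative tree `τ⁻`. -/
abbrev CNode : Type := Bool × List (Fin 3)

/-- The (raw data of a) couple `(τ⁺, τ⁻, ℘)`: a positive tree `tp`, a negative tree `tm`,
the pairing `pr` sending each leaf of `tp` to its partner leaf of `tm`, and the inverse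
pairing `pl`. -/
structure Couple : Type where
  tp : TTree
  tm : TTree
  pr : List (Fin 3) → List (Fin 3)
  pl : List (Fin 3) → List (Fin 3)

namespace Couple

/-- The tree of the given side of the couple (`true` ↦ positive tree). -/
def tree (q : Couple) (b : Bool) : TTree := if b then q.tp else q.tm

/-- The sign of a node of a couple (the root of `τ⁺` has sign `+1`, that of `τ⁻` has
sign `-1`). -/
def sign (x : CNode) : ℤ := nodeSign (if x.1 then 1 else -1) x.2

/-- `x` is a node of the couple `q`. -/
def isNode (q : Couple) (x : CNode) : Prop := (q.tree x.1).valid x.2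

/-- `x` is a leaf of the couple `q`. -/
def isLeafN (q : Couple) (x : CNode) : Prop := (q.tree x.1).isLeaf x.2

/-- `x` is a branching node of the couple `q`. -/
def isBranchN (q : Couple) (x : CNode) : Prop := (q.tree x.1).isBranch x.2

/-- Well-formedness of a couple: the two trees have the same order; `pr` is a bijection
(with inverse `pl`) from the leaves of the positive tree onto the leaves of the negative
tree, pairing leaves of opposite signs.  The fields `pr_norm` and `pl_norm` normalize the
(irrelevant) values of `pr` and `pl` off their domains, so that equality of raw couples
is equality of couples. -/
structure IsCouple (q : Couple) : Prop where
  order_eq : q.tp.order = q.tm.order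
  pr_leaf : ∀ l, q.tp.isLeaf l → q.tm.isLeaf (q.pr l)
  pl_leaf : ∀ l, q.tm.isLeaf l → q.tp.isLeaf (q.pl l)
  pl_pr : ∀ l, q.tp.isLeaf l → q.pl (q.pr l) = l
  pr_pl : ∀ l, q.tm.isLeaf l → q.pr (q.pl l) = l
  sign_pr : ∀ l, q.tp.isLeaf l → sign (false, q.pr l) = - sign (true, l)
  pr_norm : ∀ l, ¬ q.tp.isLeaf l → q.pr l = []
  pl_norm : ∀ l, ¬ q.tm.isLeaf l → q.pl l = []

/-- The set `A_p` attached to the leaf pair `p = {(true, l), (false, q.pr l)}`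
(indexed by the leaf `l` of the positive tree): the set of all nodes `m` of `q` with
`m ⪰ (true, l)` or `m ⪰ (false, q.pr l)`, i.e. all weak ancestors of the two
paired leaves. -/
def pairSet (q : Couple) (l : List (Fin 3)) : Set CNode :=
  {x | (x.1 = true ∧ x.2 <+: l) ∨ (x.1 = false ∧ x.2 <+: q.pr l)}

/-- Two nodes `x, y` of `q` are conjugate, `x ∼ y`, if for every leaf pair `p ∈ ℘`
either both belong to `A_p` or neither does. -/
def Conj (q : Couple) (x y : CNode) : Prop :=
  ∀ l, q.tp.isLeaf l →
    ((x ∈ q.pairSet l ∧ y ∈ q.pairSet l) ∨ (x ∉ q.pairSet l ∧ y ∉ q.pairSet l))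

/-- The leaf of the leaf pair indexed by the `tp`-leaf `l` carrying the sign `+1`. -/
def posLeaf (q : Couple) (l : List (Fin 3)) : CNode :=
  if sign (true, l) = 1 then ((true, l) : CNode) else ((false, q.pr l) : CNode)

/-- The leaf of the leaf pair indexed by the `tp`-leaf `l` carrying the sign `-1`. -/
def negLeaf (q : Couple) (l : List (Fin 3)) : CNode :=
  if sign (true, l) = 1 then ((false, q.pr l) : CNode) else ((true, l) : CNode)

end Couple

/-- `x` is a weak ancestor of `y` (i.e. `x ⪰ y` fails ... this states `y ⪯ x` in the
subtree order: `y` lies in the subtree rooted at `x`), as nodes of a couple. -/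
def anc (x y : CNode) : Prop := x.1 = y.1 ∧ x.2 <+: y.2

/-- The indicator `1_{x ⪰ y}` (i.e. `x` is a weak ancestor of `y`), with values in `ℤ`. -/
def ind1 (x y : CNode) : ℤ := if anc x y then 1 else 0

/-! ## Decorations -/

section Deco

variable {G : Type*} [AddCommGroup G]

/-- `ζ` is a `𝒟`-decoration of the ternary tree `t` (whose root carries sign `σ`),
valued in the additive abelian group `G`:  `ι_b ζ_b = ∑_{n : parent n = b} ι_n ζ_n`
for every branching node `b`. -/
def IsDDecoT (t : TTree) (σ : ℤ) (ζ : List (Fin 3) → G) : Prop :=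
  ∀ p, t.isBranch p →
    nodeSign σ p • ζ p = ∑ j : Fin 3, nodeSign σ (p ++ [j]) • ζ (p ++ [j])

/-- `η` is a `𝒞`-decoration of the ternary tree `t` valued in `G`:
`η_b = ∑_{n : parent n = b} η_n` for every branching node `b`. -/
def IsCDecoT (t : TTree) (η : List (Fin 3) → G) : Prop :=
  ∀ p, t.isBranch p → η p = ∑ j : Fin 3, η (p ++ [j])

/-- `ζ ∈ 𝒟^q(G)`: a map on the nodes of the couple `q` restricting to `𝒟`-decorations of
both trees and taking equal values on the two leaves of every leaf pair. -/
def IsDDeco (q : Couple) (ζ : CNode → G) : Prop :=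
  IsDDecoT q.tp 1 (fun p => ζ (true, p)) ∧
  IsDDecoT q.tm (-1) (fun p => ζ (false, p)) ∧
  ∀ l, q.tp.isLeaf l → ζ (true, l) = ζ (false, q.pr l)

/-- `η ∈ 𝒞^q(G)`: a map on the nodes of the couple `q` restricting to `𝒞`-decorations of
both trees and taking equal values on the two leaves of every leaf pair. -/
def IsCDeco (q : Couple) (η : CNode → G) : Prop :=
  IsCDecoT q.tp (fun p => η (true, p)) ∧
  IsCDecoT q.tm (fun p => η (false, p)) ∧
  ∀ l, q.tp.isLeaf l → η (true, l) = η (false, q.pr l)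

/-- `ξ ∈ 𝒟^{τ*}(G)`: a map on the nodes of `q` restricting to a `𝒟`-decoration of each of
the two trees (with no constraint at leaf pairs). -/
def IsDDecoPair (q : Couple) (ξ : CNode → G) : Prop :=
  IsDDecoT q.tp 1 (fun p => ξ (true, p)) ∧
  IsDDecoT q.tm (-1) (fun p => ξ (false, p))

end Deco

/-! ## Auxiliary machinery -/

section Aux

set_option linter.unusedSectionVars false

variable {V : Type*} [AddCommGroup V] [Module ℝ V]

lemma sub_nil' (t : TTree) : t.sub [] = some t := by cases t <;> rfl

lemma sub_child {t a b c : TTree} {p : List (Fin 3)}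
    (h : t.sub p = some (TTree.node a b c)) (j : Fin 3) :
    t.sub (p ++ [j]) = some (if j = 0 then a else if j = 1 then b else c) := by
  induction p generalizing t with
  | nil =>
      rw [sub_nil'] at h
      cases h
      fin_cases j <;> simp [TTree.sub]
  | cons i p ih =>
      cases t with
      | leaf => simp [TTree.sub] at h
      | node x y z => exact ih h

lemma sub_child0 {t a b c : TTree} {p : List (Fin 3)}
    (h : t.sub p = some (TTree.node a b c)) : t.sub (p ++ [0]) = some a := by
  simpa using sub_child h 0

lemma sub_child1 {t a b c : TTree} {p : List (Fin 3)}
    (h : t.sub p = some (TTree.node a b c)) : t.sub (p ++ [1]) = some b := by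
  simpa using sub_child h 1

lemma sub_child2 {t a b c : TTree} {p : List (Fin 3)}
    (h : t.sub p = some (TTree.node a b c)) : t.sub (p ++ [2]) = some c := by
  simpa using sub_child h 2

/-- Two `𝒞`-decorations of a tree agreeing at the leaves agree at every node. -/
lemma cdeco_unique {t : TTree} {η η' : List (Fin 3) → V}
    (h : IsCDecoT t η) (h' : IsCDecoT t η')
    (hl : ∀ l, t.isLeaf l → η l = η' l) :
    ∀ s p, t.sub p = some s → η p = η' p := by
  intro s
  induction s with
  | leaf => exact fun p hp => hl p hp
  | node a b c iha ihb ihc =>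
      intro p hp
      rw [h p ⟨a, b, c, hp⟩, h' p ⟨a, b, c, hp⟩, Fin.sum_univ_three, Fin.sum_univ_three,
        iha _ (sub_child0 hp), ihb _ (sub_child1 hp), ihc _ (sub_child2 hp)]

/-- The sum of the values of `g` over the leaves of `t` placed at prefix `pre`. -/
def liftC : TTree → (List (Fin 3) → V) → List (Fin 3) → V
  | TTree.leaf, g, pre => g pre
  | TTree.node a b c, g, pre =>
      liftC a g (pre ++ [0]) + liftC b g (pre ++ [1]) + liftC c g (pre ++ [2])

/-- The canonical `𝒞`-decoration of `t` with leaf values `g`, extended by `0` off `t`. -/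
def fill (t : TTree) (g : List (Fin 3) → V) (p : List (Fin 3)) : V :=
  (t.sub p).elim 0 (fun s => liftC s g p)

lemma fill_leaf {t : TTree} {p : List (Fin 3)} (h : t.isLeaf p) (g : List (Fin 3) → V) :
    fill t g p = g p := by
  unfold TTree.isLeaf at h
  simp [fill, h, liftC]

lemma fill_none {t : TTree} {p : List (Fin 3)} (h : t.sub p = none) (g : List (Fin 3) → V) :
    fill t g p = 0 := by simp [fill, h]

lemma fill_cdeco (t : TTree) (g : List (Fin 3) → V) : IsCDecoT t (fill t g) := by
  rintro p ⟨a, b, c, hp⟩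
  rw [Fin.sum_univ_three]
  simp only [fill, hp, sub_child0 hp, sub_child1 hp, sub_child2 hp, Option.elim_some]
  rfl

/-- The list of (absolute paths of) the leaves of `t` placed at prefix `pre`. -/
def leavesList : TTree → List (Fin 3) → List (List (Fin 3))
  | TTree.leaf, pre => [pre]
  | TTree.node a b c, pre =>
      leavesList a (pre ++ [0]) ++ (leavesList b (pre ++ [1]) ++ leavesList c (pre ++ [2]))

lemma liftC_eq_sum (t : TTree) (g : List (Fin 3) → V) (pre : List (Fin 3)) :
    liftC t g pre = ((leavesList t pre).map g).sum := by
  induction t generalizing pre with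
  | leaf => simp [liftC, leavesList]
  | node a b c iha ihb ihc => simp [liftC, leavesList, iha, ihb, ihc, add_assoc]

lemma mem_leavesList {t : TTree} {pre l : List (Fin 3)} :
    l ∈ leavesList t pre ↔ ∃ s, t.isLeaf s ∧ l = pre ++ s := by
  induction t generalizing pre with
  | leaf =>
      constructor
      · intro h
        simp only [leavesList, List.mem_singleton] at h
        exact ⟨[], rfl, by simp [h]⟩
      · rintro ⟨s, hs, rfl⟩
        cases s with
        | nil => simp [leavesList]
        | cons i s => simp [TTree.isLeaf, TTree.sub] at hs
  | node a b c iha ihb ihc =>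
      simp only [leavesList, List.mem_append, iha, ihb, ihc]
      constructor
      · rintro (⟨s, hs, rfl⟩ | ⟨s, hs, rfl⟩ | ⟨s, hs, rfl⟩)
        · exact ⟨0 :: s, hs, by simp⟩
        · exact ⟨1 :: s, hs, by simp⟩
        · exact ⟨2 :: s, hs, by simp⟩
      · rintro ⟨s, hs, rfl⟩
        cases s with
        | nil => simp [TTree.isLeaf, sub_nil'] at hs
        | cons i s =>
            have hs' : TTree.sub (if i = 0 then a else if i = 1 then b else c) s
                = some TTree.leaf := hs
            fin_cases i
            · exact Or.inl ⟨s, by simpa [TTree.isLeaf] using hs', by simp⟩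
            · exact Or.inr (Or.inl ⟨s, by simpa [TTree.isLeaf] using hs', by simp⟩)
            · exact Or.inr (Or.inr ⟨s, by simpa [TTree.isLeaf] using hs', by simp⟩)

lemma mem_leaves_nil {t : TTree} {l : List (Fin 3)} :
    l ∈ leavesList t [] ↔ t.isLeaf l := by
  rw [mem_leavesList]
  constructor
  · rintro ⟨s, hs, rfl⟩; simpa using hs
  · intro h; exact ⟨l, h, by simp⟩

lemma nodup_leavesList (t : TTree) (pre : List (Fin 3)) : (leavesList t pre).Nodup := by
  induction t generalizing pre with
  | leaf => simp [leavesList]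
  | node a b c iha ihb ihc =>
      have key : ∀ (i j : Fin 3) (u v : TTree), i ≠ j →
          (leavesList u (pre ++ [i])).Disjoint (leavesList v (pre ++ [j])) := by
        intro i j u v hij x hx hy
        obtain ⟨s, _, rfl⟩ := mem_leavesList.1 hx
        obtain ⟨s', _, h⟩ := mem_leavesList.1 hy
        rw [List.append_assoc, List.append_assoc] at h
        have h2 := List.append_cancel_left h
        simp only [List.singleton_append, List.cons.injEq] at h2
        exact hij h2.1
      refine (iha _).append ((ihb _).append (ihc _) (key 1 2 _ _ (by decide))) ?_
      intro x hx hy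
      rcases List.mem_append.1 hy with hy | hy
      · exact key 0 1 _ _ (by decide) hx hy
      · exact key 0 2 _ _ (by decide) hx hy

lemma cdeco_root {t : TTree} {η : List (Fin 3) → V} (h : IsCDecoT t η) :
    η [] = ((leavesList t []).map η).sum := by
  have h1 := cdeco_unique h (fill_cdeco t η) (fun l hl => (fill_leaf hl η).symm) t [] (sub_nil' t)
  rw [h1]
  show (TTree.sub t []).elim 0 (fun s => liftC s η []) = _
  rw [sub_nil', Option.elim_some, liftC_eq_sum]

lemma neg_map_sum (L : List (List (Fin 3))) (f : List (Fin 3) → V) :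
    ((L.map fun a => -f a).sum) = -((L.map f).sum) := by
  induction L with
  | nil => simp
  | cons a L ih => simp [ih]; abel

/-- Change of variables: summing over the leaves of `τ⁻` via the pairing. -/
lemma sum_pr (q : Couple) (hq : q.IsCouple) (f : List (Fin 3) → V) :
    ((leavesList q.tp []).map fun l => f (q.pr l)).sum = ((leavesList q.tm []).map f).sum := by
  have hperm : ((leavesList q.tp []).map q.pr).Perm (leavesList q.tm []) := by
    apply List.perm_of_nodup_nodup_toFinset_eq
    · refine List.Nodup.map_on ?_ (nodup_leavesList _ _)
      intro x hx y hy hxy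
      have hx' := mem_leaves_nil.1 hx
      have hy' := mem_leaves_nil.1 hy
      calc x = q.pl (q.pr x) := (hq.pl_pr x hx').symm
        _ = q.pl (q.pr y) := by rw [hxy]
        _ = y := hq.pl_pr y hy'
    · exact nodup_leavesList _ _
    · ext x
      simp only [List.mem_toFinset, List.mem_map, mem_leaves_nil]
      constructor
      · rintro ⟨l, hl, rfl⟩; exact hq.pr_leaf l hl
      · intro hx; exact ⟨q.pl x, hq.pl_leaf x hx, hq.pr_pl x hx⟩
  calc ((leavesList q.tp []).map fun l => f (q.pr l)).sum
      = (((leavesList q.tp []).map q.pr).map f).sum := by rw [List.map_map]; rfl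
    _ = ((leavesList q.tm []).map f).sum := (hperm.map f).sum_eq

/-! ### Signs -/

lemma sign_true (p : List (Fin 3)) : Couple.sign (true, p) = nodeSign 1 p := rfl

lemma sign_false (p : List (Fin 3)) : Couple.sign (false, p) = nodeSign (-1) p := rfl

lemma nodeSign_mul_self {σ : ℤ} (hσ : σ = 1 ∨ σ = -1) (p : List (Fin 3)) :
    nodeSign σ p * nodeSign σ p = 1 := by
  have hk : ((-1 : ℤ) ^ (p.count (1 : Fin 3))) * ((-1) ^ (p.count (1 : Fin 3))) = 1 := by
    rw [← pow_add]
    exact Even.neg_one_pow ⟨_, rfl⟩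
  unfold nodeSign
  rcases hσ with rfl | rfl
  · simpa using hk
  · rw [mul_mul_mul_comm]
    simpa using hk

lemma nodeSign_mul_self_real {σ : ℤ} (hσ : σ = 1 ∨ σ = -1) (p : List (Fin 3)) :
    ((nodeSign σ p : ℝ)) * ((nodeSign σ p : ℝ)) = 1 := by
  exact_mod_cast congrArg (fun n : ℤ => (n : ℝ)) (nodeSign_mul_self hσ p)

lemma sign_mul_self_real (x : CNode) : ((Couple.sign x : ℝ)) * ((Couple.sign x : ℝ)) = 1 := by
  rcases x with ⟨b, p⟩
  cases b
  · rw [sign_false]; exact nodeSign_mul_self_real (Or.inr rfl) p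
  · rw [sign_true]; exact nodeSign_mul_self_real (Or.inl rfl) p

lemma nodeSign_nil (σ : ℤ) : nodeSign σ [] = σ := by simp [nodeSign]

/-- `𝒟`-decorations in terms of real scalar multiplication. -/
lemma isDDecoT_real {t : TTree} {σ : ℤ} {ζ : List (Fin 3) → V} :
    IsDDecoT t σ ζ ↔ ∀ p, t.isBranch p →
      ((nodeSign σ p : ℝ)) • ζ p
        = ∑ j : Fin 3, ((nodeSign σ (p ++ [j]) : ℝ)) • ζ (p ++ [j]) := by
  simp [IsDDecoT, Int.cast_smul_eq_zsmul]

lemma ddeco_combine {t : TTree} {σ : ℤ} (hσ : σ = 1 ∨ σ = -1) {η ζ : List (Fin 3) → V}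
    (hC : IsCDecoT t η) (hD : IsDDecoT t σ ζ) :
    IsDDecoT t σ (fun p => ζ p + ((nodeSign σ p : ℝ) / 2) • η p) := by
  rw [isDDecoT_real] at hD ⊢
  intro p hp
  have hhalf : ∀ r : List (Fin 3),
      (nodeSign σ r : ℝ) * ((nodeSign σ r : ℝ) / 2) = 1 / 2 := fun r => by
    rw [← mul_div_assoc, nodeSign_mul_self_real hσ r]
  simp only [smul_add, smul_smul, hhalf]
  rw [Finset.sum_add_distrib, ← hD p hp, ← Finset.smul_sum, ← hC p hp]

lemma ddeco_uncombine {t : TTree} {σ : ℤ} (hσ : σ = 1 ∨ σ = -1) {η ξ : List (Fin 3) → V}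
    (hC : IsCDecoT t η) (hD : IsDDecoT t σ ξ) :
    IsDDecoT t σ (fun p => ξ p - ((nodeSign σ p : ℝ) / 2) • η p) := by
  rw [isDDecoT_real] at hD ⊢
  intro p hp
  have hhalf : ∀ r : List (Fin 3),
      (nodeSign σ r : ℝ) * ((nodeSign σ r : ℝ) / 2) = 1 / 2 := fun r => by
    rw [← mul_div_assoc, nodeSign_mul_self_real hσ r]
  simp only [smul_sub, smul_smul, hhalf]
  rw [Finset.sum_sub_distrib, ← hD p hp, ← Finset.smul_sum, ← hC p hp]

/-! ### Root identities -/

lemma cRoot (q : Couple) (hq : q.IsCouple) {η : CNode → V} (hη : IsCDeco q η) :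
    η (true, []) = η (false, []) := by
  rw [cdeco_root hη.1, cdeco_root hη.2.1, ← sum_pr q hq]
  exact congrArg List.sum (List.map_congr_left fun l hl => hη.2.2 l (mem_leaves_nil.1 hl))

lemma dRoot (q : Couple) (hq : q.IsCouple) {ζ : CNode → V} (hζ : IsDDeco q ζ) :
    ζ (true, []) = ζ (false, []) := by
  have ht : IsCDecoT q.tp (fun p => ((nodeSign 1 p : ℝ)) • ζ (true, p)) := isDDecoT_real.1 hζ.1
  have hm : IsCDecoT q.tm (fun p => ((nodeSign (-1) p : ℝ)) • ζ (false, p)) :=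
    isDDecoT_real.1 hζ.2.1
  have e1 := cdeco_root ht
  have e2 := cdeco_root hm
  rw [← sum_pr q hq] at e2
  have e3 : ((leavesList q.tp []).map fun l =>
      ((nodeSign (-1) (q.pr l) : ℝ)) • ζ (false, q.pr l)).sum
      = -(((leavesList q.tp []).map fun l => ((nodeSign 1 l : ℝ)) • ζ (true, l)).sum) := by
    rw [← neg_map_sum]
    refine congrArg List.sum (List.map_congr_left fun l hl => ?_)
    have hl' := mem_leaves_nil.1 hl
    have hsg : Couple.sign (false, q.pr l) = -Couple.sign (true, l) := hq.sign_pr l hl'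
    rw [sign_false, sign_true] at hsg
    rw [hsg, ← hζ.2.2 l hl']
    push_cast
    rw [neg_smul]
  rw [e3] at e2
  rw [nodeSign_nil] at e1 e2
  have e1' : ζ (true, []) = ((leavesList q.tp []).map
      fun l => ((nodeSign 1 l : ℝ)) • ζ (true, l)).sum := by
    simpa using e1
  have e2' : -(ζ (false, [])) = -(((leavesList q.tp []).map
      fun l => ((nodeSign 1 l : ℝ)) • ζ (true, l)).sum) := by
    rw [← e2]
    push_cast
    rw [neg_smul, one_smul]
  rw [← e1'] at e2'
  exact (neg_inj.1 e2').symm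

/-! ### The inverse construction -/

/-- The leaf values of `η` recovered from `ξ`. -/
def leafVal (q : Couple) (ξ : CNode → V) (l : List (Fin 3)) : V :=
  ((Couple.sign (true, l) : ℝ)) • (ξ (true, l) - ξ (false, q.pr l))

/-- The `𝒞`-component `η` recovered from `ξ`. -/
def etaOf (q : Couple) (ξ : CNode → V) : CNode → V := fun x =>
  if x.1 then fill q.tp (leafVal q ξ) x.2 else fill q.tm (fun l => leafVal q ξ (q.pl l)) x.2

lemma not_isNode_iff {q : Couple} {x : CNode} :
    ¬ q.isNode x ↔ (q.tree x.1).sub x.2 = none := by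
  simp [Couple.isNode, TTree.valid, Option.not_isSome_iff_eq_none]

lemma tree_true (q : Couple) : q.tree true = q.tp := rfl

lemma tree_false (q : Couple) : q.tree false = q.tm := rfl

lemma signR_true_nil : ((Couple.sign ((true, ([] : List (Fin 3))) : CNode) : ℝ)) = 1 := by
  norm_num [Couple.sign, nodeSign]

lemma signR_false_nil : ((Couple.sign ((false, ([] : List (Fin 3))) : CNode) : ℝ)) = -1 := by
  norm_num [Couple.sign, nodeSign]

lemma etaOf_zero {q : Couple} {ξ : CNode → V} {x : CNode} (hx : ¬ q.isNode x) :
    etaOf q ξ x = 0 := by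
  rcases x with ⟨b, p⟩
  rw [not_isNode_iff] at hx
  cases b
  · exact fill_none hx _
  · exact fill_none hx _

/-- The key leaf computation: the `𝒞`-leaf values recovered from the combination. -/
lemma leafVal_eq (q : Couple) (hq : q.IsCouple) {η ζ : CNode → V}
    (hC : IsCDeco q η) (hD : IsDDeco q ζ) {l : List (Fin 3)} (hl : q.tp.isLeaf l) :
    leafVal q (fun y => ζ y + ((Couple.sign y : ℝ) / 2) • η y) l = η (true, l) := by
  have hsg : Couple.sign (false, q.pr l) = -Couple.sign (true, l) := hq.sign_pr l hl
  simp only [leafVal]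
  rw [← hD.2.2 l hl, ← hC.2.2 l hl, hsg]
  push_cast
  rw [neg_div, neg_smul, ← sub_eq_add_neg, add_sub_sub_cancel, ← add_smul, add_halves,
    smul_smul, sign_mul_self_real, one_smul]

/-- Uniqueness of the `𝒞`-component. -/
lemma eta_unique (q : Couple) (hq : q.IsCouple) {η ζ : CNode → V}
    (hC : IsCDeco q η) (hD : IsDDeco q ζ) (h0 : ∀ x, ¬ q.isNode x → η x = 0)
    (x : CNode) :
    η x = etaOf q (fun y => ζ y + ((Couple.sign y : ℝ) / 2) • η y) x := by
  rcases x with ⟨b, p⟩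
  cases b
  · show η (false, p)
      = fill q.tm (fun l => leafVal q (fun y => ζ y + ((Couple.sign y : ℝ) / 2) • η y) (q.pl l)) p
    cases hsub : q.tm.sub p with
    | none => rw [h0 _ ((not_isNode_iff (x := (false, p))).2 hsub), fill_none hsub]
    | some s =>
        refine cdeco_unique hC.2.1 (fill_cdeco q.tm _) ?_ s p hsub
        intro l hl
        rw [fill_leaf hl]
        show η (false, l)
          = leafVal q (fun y => ζ y + ((Couple.sign y : ℝ) / 2) • η y) (q.pl l)
        have hl' : q.tp.isLeaf (q.pl l) := hq.pl_leaf l hl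
        rw [leafVal_eq q hq hC hD hl', hC.2.2 (q.pl l) hl', hq.pr_pl l hl]
  · show η (true, p)
      = fill q.tp (leafVal q (fun y => ζ y + ((Couple.sign y : ℝ) / 2) • η y)) p
    cases hsub : q.tp.sub p with
    | none => rw [h0 _ ((not_isNode_iff (x := (true, p))).2 hsub), fill_none hsub]
    | some s =>
        refine cdeco_unique hC.1 (fill_cdeco q.tp _) ?_ s p hsub
        intro l hl
        rw [fill_leaf hl, leafVal_eq q hq hC hD hl]

/-- The surjectivity construction: `η := etaOf q ξ`, `ζ := ξ - (ι/2) • η`. -/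
lemma surj_aux (q : Couple) (hq : q.IsCouple) {ξ : CNode → V}
    (hξ : IsDDecoPair q ξ) (h0 : ∀ x, ¬ q.isNode x → ξ x = 0) :
    IsCDeco q (etaOf q ξ) ∧
    IsDDeco q (fun x => ξ x - ((Couple.sign x : ℝ) / 2) • etaOf q ξ x) ∧
    (∀ x, ¬ q.isNode x →
      etaOf q ξ x = 0 ∧ ξ x - ((Couple.sign x : ℝ) / 2) • etaOf q ξ x = 0) ∧
    (fun x : CNode =>
        (ξ x - ((Couple.sign x : ℝ) / 2) • etaOf q ξ x)
          + ((Couple.sign x : ℝ) / 2) • etaOf q ξ x) = ξ := by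
  have hCe : IsCDeco q (etaOf q ξ) := by
    refine ⟨fill_cdeco q.tp _, fill_cdeco q.tm _, ?_⟩
    intro l hl
    show fill q.tp (leafVal q ξ) l = fill q.tm (fun l' => leafVal q ξ (q.pl l')) (q.pr l)
    rw [fill_leaf hl, fill_leaf (hq.pr_leaf l hl)]
    show leafVal q ξ l = leafVal q ξ (q.pl (q.pr l))
    rw [hq.pl_pr l hl]
  refine ⟨hCe, ⟨?_, ?_, ?_⟩, ?_, ?_⟩
  · exact ddeco_uncombine (Or.inl rfl) (fill_cdeco q.tp (leafVal q ξ)) hξ.1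
  · exact ddeco_uncombine (Or.inr rfl) (fill_cdeco q.tm _) hξ.2
  · intro l hl
    show ξ (true, l) - ((Couple.sign (true, l) : ℝ) / 2) • fill q.tp (leafVal q ξ) l
      = ξ (false, q.pr l) - ((Couple.sign (false, q.pr l) : ℝ) / 2)
          • fill q.tm (fun l' => leafVal q ξ (q.pl l')) (q.pr l)
    rw [fill_leaf hl, fill_leaf (hq.pr_leaf l hl)]
    rw [hq.pl_pr l hl]
    have hsg : Couple.sign (false, q.pr l) = -Couple.sign (true, l) := hq.sign_pr l hl
    have key : ξ (true, l) - ξ (false, q.pr l)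
        = ((Couple.sign (true, l) : ℝ)) • leafVal q ξ l := by
      show _ = ((Couple.sign (true, l) : ℝ))
        • (((Couple.sign (true, l) : ℝ)) • (ξ (true, l) - ξ (false, q.pr l)))
      rw [smul_smul, sign_mul_self_real, one_smul]
    have key2 : ξ (true, l) = ((Couple.sign (true, l) : ℝ)) • leafVal q ξ l
        + ξ (false, q.pr l) := sub_eq_iff_eq_add.1 key
    rw [hsg]
    push_cast
    rw [neg_div, neg_smul, sub_neg_eq_add, key2, add_sub_right_comm, ← sub_smul, sub_half,
      add_comm]
  · intro x hx
    refine ⟨etaOf_zero hx, ?_⟩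
    rw [h0 x hx, etaOf_zero hx, smul_zero, sub_zero]
  · funext x
    exact sub_add_cancel _ _

end Aux

/-- The map `(η, ζ) ↦ ξ`, `ξ_n = ζ_n + ι_n η_n / 2`, is a linear
isomorphism from `𝒞^q(ℝ^d) × 𝒟^q(ℝ^d)` onto `𝒟^{τ*}(ℝ^d)`, restricting, for all
`η, ζ ∈ ℝ^d`, to a bijection from `𝒞^q_η × 𝒟^q_ζ` onto `𝒟^{τ*}_{ζ+η/2, ζ−η/2}`.
(Decorations are regarded as maps on the nodes, i.e. extended by `0` off the nodes.) -/
theorem statement19 (d : ℕ) (hd : 1 ≤ d) (q : Couple) (hq : q.IsCouple) :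
    (∀ a b : (CNode → EuclideanSpace ℝ (Fin d)) × (CNode → EuclideanSpace ℝ (Fin d)),
      (fun x : CNode => (a + b).2 x + ((Couple.sign x : ℝ) / 2) • (a + b).1 x) =
        (fun x : CNode => a.2 x + ((Couple.sign x : ℝ) / 2) • a.1 x) +
          fun x : CNode => b.2 x + ((Couple.sign x : ℝ) / 2) • b.1 x) ∧
    (∀ (c : ℝ)
        (a : (CNode → EuclideanSpace ℝ (Fin d)) × (CNode → EuclideanSpace ℝ (Fin d))),
      (fun x : CNode => (c • a).2 x + ((Couple.sign x : ℝ) / 2) • (c • a).1 x) =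
        c • fun x : CNode => a.2 x + ((Couple.sign x : ℝ) / 2) • a.1 x) ∧
    Set.BijOn
      (fun p : (CNode → EuclideanSpace ℝ (Fin d)) × (CNode → EuclideanSpace ℝ (Fin d)) =>
        fun x : CNode => p.2 x + ((Couple.sign x : ℝ) / 2) • p.1 x)
      {p | IsCDeco q p.1 ∧ IsDDeco q p.2 ∧
        ∀ x : CNode, ¬ q.isNode x → p.1 x = 0 ∧ p.2 x = 0}
      {ξ | IsDDecoPair q ξ ∧ ∀ x : CNode, ¬ q.isNode x → ξ x = 0} ∧
    ∀ η ζ : EuclideanSpace ℝ (Fin d),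
      Set.BijOn
        (fun p : (CNode → EuclideanSpace ℝ (Fin d)) × (CNode → EuclideanSpace ℝ (Fin d)) =>
          fun x : CNode => p.2 x + ((Couple.sign x : ℝ) / 2) • p.1 x)
        {p | IsCDeco q p.1 ∧ IsDDeco q p.2 ∧
          (∀ x : CNode, ¬ q.isNode x → p.1 x = 0 ∧ p.2 x = 0) ∧
          p.1 ((true, []) : CNode) = η ∧ p.1 ((false, []) : CNode) = η ∧
          p.2 ((true, []) : CNode) = ζ ∧ p.2 ((false, []) : CNode) = ζ}
        {ξ | IsDDecoPair q ξ ∧ (∀ x : CNode, ¬ q.isNode x → ξ x = 0) ∧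
          ξ ((true, []) : CNode) = ζ + (2⁻¹ : ℝ) • η ∧
          ξ ((false, []) : CNode) = ζ - (2⁻¹ : ℝ) • η} := by
  classical
  have hInj : Set.InjOn
      (fun p : (CNode → EuclideanSpace ℝ (Fin d)) × (CNode → EuclideanSpace ℝ (Fin d)) =>
        fun x : CNode => p.2 x + ((Couple.sign x : ℝ) / 2) • p.1 x)
      {p | IsCDeco q p.1 ∧ IsDDeco q p.2 ∧
        ∀ x : CNode, ¬ q.isNode x → p.1 x = 0 ∧ p.2 x = 0} := by
    intro p hp p' hp' himg
    simp only at himg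
    have hη : p.1 = p'.1 := by
      funext x
      rw [eta_unique q hq hp.1 hp.2.1 (fun y hy => (hp.2.2 y hy).1) x, himg,
        ← eta_unique q hq hp'.1 hp'.2.1 (fun y hy => (hp'.2.2 y hy).1) x]
    have hζ : p.2 = p'.2 := by
      funext x
      have h1 := congrFun himg x
      rw [hη] at h1
      exact add_right_cancel h1
    rw [Prod.ext_iff]
    exact ⟨hη, hζ⟩
  have hMap : ∀ p : (CNode → EuclideanSpace ℝ (Fin d)) × (CNode → EuclideanSpace ℝ (Fin d)),
      (IsCDeco q p.1 ∧ IsDDeco q p.2 ∧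
        ∀ x : CNode, ¬ q.isNode x → p.1 x = 0 ∧ p.2 x = 0) →
      IsDDecoPair q (fun x : CNode => p.2 x + ((Couple.sign x : ℝ) / 2) • p.1 x) ∧
      ∀ x : CNode, ¬ q.isNode x → p.2 x + ((Couple.sign x : ℝ) / 2) • p.1 x = 0 := by
    rintro p ⟨hC, hD, h0⟩
    refine ⟨⟨?_, ?_⟩, ?_⟩
    · exact ddeco_combine (Or.inl rfl) hC.1 hD.1
    · exact ddeco_combine (Or.inr rfl) hC.2.1 hD.2.1
    · intro x hx
      rw [(h0 x hx).1, (h0 x hx).2, smul_zero, add_zero]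
  refine ⟨?_, ?_, ⟨?_, hInj, ?_⟩, ?_⟩
  · intro a b
    funext x
    simp only [Prod.fst_add, Prod.snd_add, Pi.add_apply, smul_add]
    abel
  · intro c a
    funext x
    simp only [Prod.smul_fst, Prod.smul_snd, Pi.smul_apply, smul_add]
    rw [smul_comm]
  · -- MapsTo
    intro p hp
    exact hMap p hp
  · -- SurjOn
    rintro ξ ⟨hpair, h0⟩
    obtain ⟨hCe, hDz, hz0, hid⟩ := surj_aux q hq hpair h0
    rw [Set.mem_image]
    refine ⟨(etaOf q ξ, fun x => ξ x - ((Couple.sign x : ℝ) / 2) • etaOf q ξ x), ?_, hid⟩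
    refine ⟨hCe, hDz, hz0⟩
  · -- the restricted bijections
    intro η₀ ζ₀
    refine ⟨?_, Set.InjOn.mono ?_ hInj, ?_⟩
    swap
    · intro p hp
      exact ⟨hp.1, hp.2.1, hp.2.2.1⟩
    · rintro p ⟨hC, hD, h0, hη1, hη2, hζ1, hζ2⟩
      obtain ⟨hp1, hp2⟩ := hMap p ⟨hC, hD, h0⟩
      refine ⟨hp1, hp2, ?_, ?_⟩
      · show p.2 ((true, []) : CNode)
            + ((Couple.sign ((true, []) : CNode) : ℝ) / 2) • p.1 ((true, []) : CNode) = _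
        rw [hζ1, hη1, signR_true_nil]
        norm_num
      · show p.2 ((false, []) : CNode)
            + ((Couple.sign ((false, []) : CNode) : ℝ) / 2) • p.1 ((false, []) : CNode) = _
        rw [hζ2, hη2, signR_false_nil]
        rw [neg_div, neg_smul, ← sub_eq_add_neg]
        norm_num
    · rintro ξ ⟨hpair, h0, hr1, hr2⟩
      obtain ⟨hCe, hDz, hz0, hid⟩ := surj_aux q hq hpair h0
      have hA : etaOf q ξ ((true, []) : CNode) = etaOf q ξ ((false, []) : CNode) :=
        cRoot q hq hCe
      have hZ : ξ ((true, []) : CNode)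
            - ((Couple.sign ((true, []) : CNode) : ℝ) / 2) • etaOf q ξ ((true, []) : CNode)
          = ξ ((false, []) : CNode)
            - ((Couple.sign ((false, []) : CNode) : ℝ) / 2)
              • etaOf q ξ ((false, []) : CNode) :=
        dRoot q hq hDz
      rw [signR_true_nil, signR_false_nil, ← hA] at hZ
      rw [neg_div, neg_smul, sub_neg_eq_add] at hZ
      rw [hr1, hr2] at hZ
      have h2 : ((1 : ℝ) / 2) = (2⁻¹ : ℝ) := by norm_num
      rw [h2] at hZ
      have hAval : etaOf q ξ ((true, []) : CNode) = η₀ := by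
        have h4 : (2⁻¹ : ℝ) • η₀ + (2⁻¹ : ℝ) • η₀
            = (2⁻¹ : ℝ) • etaOf q ξ ((true, []) : CNode)
              + (2⁻¹ : ℝ) • etaOf q ξ ((true, []) : CNode) := by
          calc (2⁻¹ : ℝ) • η₀ + (2⁻¹ : ℝ) • η₀
              = (ζ₀ + (2⁻¹ : ℝ) • η₀ - (2⁻¹ : ℝ) • etaOf q ξ ((true, []) : CNode))
                + ((2⁻¹ : ℝ) • etaOf q ξ ((true, []) : CNode) + (2⁻¹ : ℝ) • η₀ - ζ₀) := by
                abel
            _ = (ζ₀ - (2⁻¹ : ℝ) • η₀ + (2⁻¹ : ℝ) • etaOf q ξ ((true, []) : CNode))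
                + ((2⁻¹ : ℝ) • etaOf q ξ ((true, []) : CNode) + (2⁻¹ : ℝ) • η₀ - ζ₀) := by
                rw [hZ]
            _ = (2⁻¹ : ℝ) • etaOf q ξ ((true, []) : CNode)
                + (2⁻¹ : ℝ) • etaOf q ξ ((true, []) : CNode) := by abel
        rw [← add_smul, ← add_smul] at h4
        norm_num at h4
        exact h4.symm
      have hZval : ξ ((true, []) : CNode)
          - ((Couple.sign ((true, []) : CNode) : ℝ) / 2)
            • etaOf q ξ ((true, []) : CNode) = ζ₀ := by
        rw [signR_true_nil, h2, hAval, hr1]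
        abel
      have hZval' : ξ ((false, []) : CNode)
          - ((Couple.sign ((false, []) : CNode) : ℝ) / 2)
            • etaOf q ξ ((false, []) : CNode) = ζ₀ := by
        rw [signR_false_nil, ← hA, hAval, hr2]
        rw [neg_div, neg_smul, sub_neg_eq_add, h2]
        abel
      rw [Set.mem_image]
      refine ⟨(etaOf q ξ, fun x => ξ x - ((Couple.sign x : ℝ) / 2) • etaOf q ξ x), ?_, hid⟩
      refine ⟨hCe, hDz, hz0, hAval, ?_, hZval, hZval'⟩
      show etaOf q ξ ((false, []) : CNode) = η₀
      rw [← hA]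
      exact hAval

end WickNLS

end
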